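/- Let V be a finite-dimensional complex vector space, h a Hermitian metric and C a non-degenerate symmetric bilinear form on V. Then h is compatible with C if and only if there exists a basis (e_1, …, e_n) of V which is orthonormal with respect to both h and C, i.e. h(e_i, e_j) = δ_{ij} and C(e_i, e_j) = δ_{ij} for all i, j. -/

import Mathlib

noncomputable section

variable {V : Type*} [AddCommGroup V] [Module ℂ V] [FiniteDimensional ℂ V]

/-- `h` is a Hermitian metric on the complex vector space `V`:
it is additive and `ℂ`-linear in the first argument, Hermitian-symmetric
(hence conjugate-linear in the second argument), and positive definite. -/
def IsHermitianMetric (h : V → V → ℂ) : Prop :=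
  (∀ u v w : V, h (u + v) w = h u w + h v w) ∧
  (∀ (a : ℂ) (u v : V), h (a • u) v = a * h u v) ∧
  (∀ u v : V, h u v = starRingEnd ℂ (h v u)) ∧
  (∀ v : V, v ≠ 0 → 0 < (h v v).re)

/-- `C` is a non-degenerate symmetric `ℂ`-bilinear form on `V`. -/
def IsNondegSymmBilin (C : V → V → ℂ) : Prop :=
  (∀ u v w : V, C (u + v) w = C u w + C v w) ∧
  (∀ (a : ℂ) (u v : V), C (a • u) v = a * C u v) ∧
  (∀ u v : V, C u v = C v u) ∧
  (∀ v : V, (∀ u : V, C v u = 0) → v = 0)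

/-- `Ψ_h : V → V^*`, `Ψ_h(u)(v) = h(v,u)`; it is conjugate-linear in `u`. -/
def PsiH (h : V → V → ℂ) : V → V → ℂ := fun u v => h v u

/-- The dual Hermitian metric `h^∨` on `V^* `:
`h^∨(f,g) = h(Ψ_h⁻¹(g), Ψ_h⁻¹(f))`. -/
def dualMetric (h : V → V → ℂ) : (V → ℂ) → (V → ℂ) → ℂ :=
  fun f g => h (Function.invFun (PsiH h) g) (Function.invFun (PsiH h) f)

/-- `h` is compatible with the form `C` if `Ψ_C : V → V^*`, `Ψ_C(u) = C(u,·) = C u`,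
is isometric with respect to `h` and `h^∨`, i.e. `h^∨(Ψ_C u, Ψ_C v) = h(u,v)`. -/
def Compatible (h C : V → V → ℂ) : Prop :=
  ∀ u v : V, dualMetric h (C u) (C v) = h u v

/-- `h` is compatible with `C` iff there exists a basis of `V` which is orthonormal
with respect to both `h` and `C`. -/
theorem compatible_iff_exists_biorthonormal_basis
    (h C : V → V → ℂ) (hh : IsHermitianMetric h) (hC : IsNondegSymmBilin C) :
    Compatible h C ↔
      ∃ e : Module.Basis (Fin (Module.finrank ℂ V)) ℂ V,
        ∀ i j, h (e i) (e j) = (if i = j then 1 else 0) ∧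
               C (e i) (e j) = (if i = j then 1 else 0) := by
  obtain ⟨hadd, hsmul, hconj, hpos⟩ := hh
  obtain ⟨Cadd, Csmul, Csymm, Cnondeg⟩ := hC
  -- additivity / conjugate-linearity in the second slot
  have haddr : ∀ u v w : V, h u (v + w) = h u v + h u w := by
    intro u v w
    rw [hconj u (v + w), hadd, map_add, ← hconj, ← hconj]
  have hsmulr : ∀ (a : ℂ) (u v : V), h u (a • v) = starRingEnd ℂ a * h u v := by
    intro a u v
    rw [hconj u (a • v), hsmul, map_mul, ← hconj]
  have Caddr : ∀ u v w : V, C u (v + w) = C u v + C u w := by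
    intro u v w; rw [Csymm, Cadd, Csymm v u, Csymm w u]
  have Csmulr : ∀ (a : ℂ) (u v : V), C u (a • v) = a * C u v := by
    intro a u v; rw [Csymm, Csmul, Csymm v u]
  have h0l : ∀ v : V, h 0 v = 0 := fun v => by
    simpa using hsmul 0 0 v
  have h0r : ∀ v : V, h v 0 = 0 := fun v => by
    simpa using hsmulr 0 v 0
  have C0l : ∀ v : V, C 0 v = 0 := fun v => by
    simpa using Csmul 0 0 v
  have hsubr : ∀ u v w : V, h u (v - w) = h u v - h u w := by
    intro u v w
    have : h u (v - w) + h u w = h u v := by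
      rw [← haddr, sub_add_cancel]
    linear_combination this
  have hsubl : ∀ u v w : V, h (u - v) w = h u w - h v w := by
    intro u v w
    have : h (u - v) w + h v w = h u w := by
      rw [← hadd, sub_add_cancel]
    linear_combination this
  have hself : ∀ v : V, h v v = 0 → v = 0 := by
    intro v hv
    by_contra hne
    have := hpos v hne
    rw [hv] at this
    simp at this
  have hdef : ∀ a b : V, (∀ y, h y a = h y b) → a = b := by
    intro a b hab
    have hz : h (a - b) (a - b) = 0 := by
      rw [hsubr, hab (a - b), sub_self]
    have := hself _ hz
    exact sub_eq_zero.mp this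
  -- the inner product space structure coming from `h`
  letI core : InnerProductSpace.Core ℂ V :=
    { inner := fun x y => h y x
      conj_inner_symm := fun x y => by
        show starRingEnd ℂ (h x y) = h y x
        rw [← hconj]
      re_inner_nonneg := fun x => by
        rcases eq_or_ne x 0 with rfl | hx
        · simp [h0l]
        · exact le_of_lt (hpos x hx)
      add_left := fun x y z => haddr z x y
      smul_left := fun x y r => by
        simpa using hsmulr r y x
      definite := fun x hx => hself x hx }
  letI : NormedAddCommGroup V := core.toNormedAddCommGroup
  letI : InnerProductSpace ℂ V := InnerProductSpace.ofCore core.toCore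
  -- Riesz representation: every `C u` is in the range of `Ψ_h`
  have riesz : ∀ u : V, ∃ w : V, PsiH h w = C u := by
    intro u
    let f : V →ₗ[ℂ] ℂ :=
      { toFun := fun y => C u y
        map_add' := fun y z => Caddr u y z
        map_smul' := fun a y => Csmulr a u y }
    obtain ⟨w, hw⟩ := (InnerProductSpace.toDual ℂ V).surjective (LinearMap.toContinuousLinearMap f)
    refine ⟨w, funext fun y => ?_⟩
    have : (InnerProductSpace.toDual ℂ V w) y = f y := by rw [hw]; rfl
    rw [InnerProductSpace.toDual_apply_apply] at this
    exact this
  set T : V → V := fun u => Function.invFun (PsiH h) (C u) with hTdef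
  have hT : ∀ u y : V, h y (T u) = C u y := by
    intro u y
    have : PsiH h (T u) = C u := Function.invFun_eq (riesz u)
    exact congrFun this y
  have Tadd : ∀ u v : V, T (u + v) = T u + T v := by
    intro u v
    apply hdef
    intro y
    rw [hT, Cadd, haddr, hT, hT]
  have Tsmul : ∀ (a : ℂ) (u : V), T (a • u) = starRingEnd ℂ a • T u := by
    intro a u
    apply hdef
    intro y
    rw [hT, Csmul, hsmulr, Complex.conj_conj, hT]
  have T0 : T 0 = 0 := by
    apply hdef
    intro y
    rw [hT, C0l, h0r]
  have Tsub : ∀ u v : V, T (u - v) = T u - T v := by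
    intro u v
    have h1 : T (u + (-1 : ℂ) • v) = T u + starRingEnd ℂ (-1 : ℂ) • T v := by
      rw [Tadd, Tsmul]
    simpa [sub_eq_add_neg] using h1
  constructor
  · -- compatible → biorthonormal basis
    intro comp
    have comp' : ∀ u v : V, h (T v) (T u) = h u v := fun u v => comp u v
    have Tinv : ∀ u : V, T (T u) = u := by
      intro u
      apply hdef
      intro y
      calc h y (T (T u)) = C (T u) y := hT (T u) y
        _ = C y (T u) := Csymm _ _
        _ = h (T u) (T y) := (hT y (T u)).symm
        _ = h y u := comp' y u
    have hsym : ∀ x y : V, T x = x → T y = y → h x y = h y x := by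
      intro x y hx hy
      have := comp' y x
      rwa [hx, hy] at this
    have hrealfix : ∀ x y : V, T x = x → T y = y → (h x y).im = 0 := by
      intro x y hx hy
      have h2 := hconj x y
      rw [← hsym x y hx hy] at h2
      exact Complex.conj_eq_iff_im.mp h2.symm
    have hCfix : ∀ x y : V, T x = x → T y = y → C x y = h x y := by
      intro x y hx hy
      calc C x y = h y (T x) := (hT x y).symm
        _ = h y x := by rw [hx]
        _ = h x y := (hsym x y hx hy).symm
    -- the real subspace of fixed points of T
    let W : Submodule ℝ V :=
      { carrier := {v | T v = v}
        add_mem' := fun {a b} ha hb => by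
          simp only [Set.mem_setOf_eq] at *
          rw [Tadd, ha, hb]
        zero_mem' := T0
        smul_mem' := fun r v hv => by
          simp only [Set.mem_setOf_eq] at *
          have hrv : r • v = (r : ℂ) • v := by
            rw [← algebraMap_smul ℂ r v]
            norm_num
          rw [hrv, Tsmul, hv, Complex.conj_ofReal] }
    -- the real inner product structure on W
    haveI : FiniteDimensional ℝ V := FiniteDimensional.complexToReal V
    letI : Inner ℝ W := ⟨fun x y => (h (x : V) (y : V)).re⟩
    letI : InnerProductSpace ℝ W :=
      { toNormedSpace := inferInstance
        toInner := inferInstance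
        norm_sq_eq_re_inner := fun x => by
          show ‖x‖ ^ 2 = (h (x : V) (x : V)).re
          have h1 : ‖x‖ = ‖(x : V)‖ := rfl
          rw [h1, ← inner_self_eq_norm_sq (𝕜 := ℂ) ((x : V))]
          rfl
        conj_inner_symm := fun x y => by
          show starRingEnd ℝ ((h (y : V) (x : V)).re) = (h (x : V) (y : V)).re
          rw [starRingEnd_apply, star_trivial, hconj (y : V) (x : V), Complex.conj_re]
        add_left := fun x y z => by
          show (h ((x : V) + (y : V)) (z : V)).re
            = (h (x : V) (z : V)).re + (h (y : V) (z : V)).re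
          rw [hadd, Complex.add_re]
        smul_left := fun x y r => by
          show (h ((r • x : W) : V) (y : V)).re = starRingEnd ℝ r * (h (x : V) (y : V)).re
          have hc : ((r • x : W) : V) = (r : ℂ) • (x : V) := by
            rw [Submodule.coe_smul, ← algebraMap_smul ℂ r (x : V), Complex.coe_algebraMap]
          rw [hc, hsmul, starRingEnd_apply, star_trivial, Complex.re_ofReal_mul] }
    let e := stdOrthonormalBasis ℝ W
    have heval : ∀ i j, h ((e i : W) : V) ((e j : W) : V) = if i = j then 1 else 0 := by
      intro i j
      have hre := orthonormal_iff_ite.mp e.orthonormal i j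
      have him : (h ((e i : W) : V) ((e j : W) : V)).im = 0 :=
        hrealfix _ _ (e i).2 (e j).2
      apply Complex.ext
      · rw [show ((if i = j then (1:ℂ) else 0)).re = (if i = j then (1:ℝ) else 0) from by
          split <;> simp]
        exact hre
      · rw [him]
        split <;> simp
    have hon : Orthonormal ℂ (fun i => ((e i : W) : V)) := by
      rw [orthonormal_iff_ite]
      intro i j
      have : (inner ℂ (((e i : W) : V)) (((e j : W) : V)) : ℂ) = h ((e j : W) : V) ((e i : W) : V) := rfl
      rw [this, heval]
      simp [eq_comm]
    have hWspan : ∀ w : V, T w = w →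
        w ∈ Submodule.span ℂ (Set.range fun i => ((e i : W) : V)) := by
      intro w hw
      have h1 : (⟨w, hw⟩ : W) ∈ Submodule.span ℝ (Set.range e.toBasis) := by
        rw [e.toBasis.span_eq]; trivial
      have h2 : w ∈ Submodule.map W.subtype (Submodule.span ℝ (Set.range e.toBasis)) :=
        ⟨⟨w, hw⟩, h1, rfl⟩
      rw [Submodule.map_span] at h2
      have himg : W.subtype '' Set.range e.toBasis = Set.range fun i => ((e i : W) : V) := by
        rw [← Set.range_comp]
        refine congrArg Set.range (funext fun i => ?_)
        show ((e.toBasis i : W) : V) = ((e i : W) : V)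
        rw [OrthonormalBasis.coe_toBasis]
      rw [himg] at h2
      exact Submodule.span_le_restrictScalars ℝ ℂ _ h2
    have hspan : ⊤ ≤ Submodule.span ℂ (Set.range fun i => ((e i : W) : V)) := by
      intro v _
      have hTa : T ((2⁻¹ : ℂ) • (v + T v)) = (2⁻¹ : ℂ) • (v + T v) := by
        rw [Tsmul, Tadd, Tinv]
        rw [show starRingEnd ℂ (2⁻¹ : ℂ) = (2⁻¹ : ℂ) by
          rw [show ((2⁻¹:ℂ)) = ((2⁻¹:ℝ):ℂ) by norm_num, Complex.conj_ofReal]]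
        rw [add_comm]
      have hTb : T ((-(Complex.I) * 2⁻¹) • (v - T v)) =
          (-(Complex.I) * 2⁻¹) • (v - T v) := by
        rw [Tsmul, Tsub, Tinv]
        rw [show starRingEnd ℂ (-(Complex.I) * 2⁻¹) = Complex.I * 2⁻¹ by
          rw [map_mul, map_neg, Complex.conj_I, neg_neg,
            show ((2⁻¹:ℂ)) = ((2⁻¹:ℝ):ℂ) by norm_num, Complex.conj_ofReal]]
        module
      have hv : v = (2⁻¹ : ℂ) • (v + T v) +
          Complex.I • ((-(Complex.I) * 2⁻¹) • (v - T v)) := by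
        rw [smul_smul]
        rw [show Complex.I * (-(Complex.I) * 2⁻¹) = (2⁻¹ : ℂ) by
          rw [show Complex.I * (-(Complex.I) * 2⁻¹) = -(Complex.I * Complex.I) * 2⁻¹ by ring,
            Complex.I_mul_I]
          norm_num]
        module
      rw [hv]
      exact Submodule.add_mem _ (hWspan _ hTa)
        (Submodule.smul_mem _ _ (hWspan _ hTb))
    let b0 : Module.Basis (Fin (Module.finrank ℝ W)) ℂ V := Module.Basis.mk hon.linearIndependent hspan
    have hb0 : ∀ k, b0 k = ((e k : W) : V) := fun k => Module.Basis.mk_apply _ _ k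
    have hcard : Module.finrank ℝ W = Module.finrank ℂ V := by
      have := Module.finrank_eq_card_basis b0
      simpa using this.symm
    refine ⟨b0.reindex (finCongr hcard), ?_⟩
    intro i j
    rw [Module.Basis.reindex_apply, Module.Basis.reindex_apply, hb0, hb0]
    have hiff : (finCongr hcard).symm i = (finCongr hcard).symm j ↔ i = j :=
      (finCongr hcard).symm.apply_eq_iff_eq
    constructor
    · rw [heval]
      simp [Fin.ext_iff]
    · rw [hCfix _ _ (e _).2 (e _).2, heval]
      simp [Fin.ext_iff]
  · -- biorthonormal basis → compatible
    rintro ⟨e, he⟩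
    have hTe : ∀ k, T (e k) = e k := by
      intro k
      apply hdef
      intro y
      rw [hT]
      have key : ∀ y, C (e k) y = h y (e k) := by
        let L1 : V →ₗ[ℂ] ℂ :=
          { toFun := fun y => C (e k) y
            map_add' := fun y z => Caddr (e k) y z
            map_smul' := fun a y => Csmulr a (e k) y }
        let L2 : V →ₗ[ℂ] ℂ :=
          { toFun := fun y => h y (e k)
            map_add' := fun y z => hadd y z (e k)
            map_smul' := fun a y => hsmul a y (e k) }
        have hLL : L1 = L2 := by
          apply Module.Basis.ext e
          intro j
          show C (e k) (e j) = h (e j) (e k)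
          rw [Csymm, (he j k).2, (he j k).1]
        exact fun y => LinearMap.congr_fun hLL y
      exact key y
    intro u v
    show h (T v) (T u) = h u v
    let B : V →ₗ[ℂ] V →ₛₗ[starRingEnd ℂ] ℂ :=
      LinearMap.mk₂'ₛₗ (RingHom.id ℂ) (starRingEnd ℂ) h hadd
        (fun c m n => hsmul c m n) haddr (fun c m n => hsmulr c m n)
    let B' : V →ₗ[ℂ] V →ₛₗ[starRingEnd ℂ] ℂ :=
      LinearMap.mk₂'ₛₗ (RingHom.id ℂ) (starRingEnd ℂ) (fun u v => h (T v) (T u))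
        (fun m₁ m₂ n => by
          show h (T n) (T (m₁ + m₂)) = h (T n) (T m₁) + h (T n) (T m₂)
          rw [Tadd, haddr])
        (fun c m n => by
          show h (T n) (T (c • m)) = RingHom.id ℂ c • h (T n) (T m)
          rw [Tsmul, hsmulr, Complex.conj_conj]
          rfl)
        (fun m n₁ n₂ => by
          show h (T (n₁ + n₂)) (T m) = h (T n₁) (T m) + h (T n₂) (T m)
          rw [Tadd, hadd])
        (fun c m n => by
          show h (T (c • n)) (T m) = starRingEnd ℂ c • h (T n) (T m)
          rw [Tsmul, hsmul]
          rfl)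
    have hBB : B' = B := by
      apply Module.Basis.ext e
      intro i
      apply Module.Basis.ext e
      intro j
      show h (T (e j)) (T (e i)) = h (e i) (e j)
      rw [hTe, hTe, (he j i).1, (he i j).1]
      simp [eq_comm]
    exact LinearMap.congr_fun (LinearMap.congr_fun hBB u) v
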